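/- Suppose C(t) is nonempty and convex for every t ∈ [0,T], C is Lipschitz-like around every point of its graph (i.e., for every t̄ ∈ [0,T] and x̄ ∈ C(t̄) there exist a neighborhood V of t̄ in [0,T], a neighborhood W of x̄ in H, and κ > 0 such that C(t') ∩ W ⊆ C(t'') + κ|t' − t''|·B̄(0,1) for all t', t'' ∈ V, where B̄(0,1) is the closed unit ball), and there exist positive constants c₁, c₂ such that ⟨A₁ x, x⟩ ≥ c₁‖x‖² − c₂ for every t ∈ [0,T] and every x ∈ C(t). Then for every u₀ ∈ C(0) there exists M > 0 such that every solution u of the sweeping process (P) with initial value u₀, with Bochner-integrable derivative v, satisfies ‖u(t)‖ ≤ M for all t ∈ [0,T] and ∫₀ᵀ ‖v(τ)‖ dτ ≤ M; i.e., the solution set Sol(P,u₀) is bounded in C⁰([0,T],H) and in W^{1,1}([0,T],H). -/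

import Mathlib

open MeasureTheory Set
open scoped RealInnerProductSpace

/-- `u` (with Bochner-integrable derivative `v`) is a solution of the sweeping process (P)
with velocity constraint `C`, data `A₀, A₁, f`, and initial value `u₀` on `[0,T]`. -/
def SweepSol {H : Type*} [NormedAddCommGroup H] [InnerProductSpace ℝ H]
    (T : ℝ) (A₀ A₁ : H →L[ℝ] H) (f : ℝ → H) (C : ℝ → Set H)
    (u₀ : H) (u v : ℝ → H) : Prop :=
  IntegrableOn v (Icc 0 T) ∧
  (∀ t ∈ Icc (0:ℝ) T, u t = u₀ + ∫ τ in (0:ℝ)..t, v τ) ∧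
  (∀ᵐ t ∂(volume.restrict (Icc (0:ℝ) T)),
    v t ∈ C t ∧ ∀ z ∈ C t, 0 ≤ ⟪A₁ (v t) + A₀ (u t) - f t, z - v t⟫)

private lemma sqrt_le_one_add' (x : ℝ) (hx : 0 ≤ x) : Real.sqrt x ≤ 1 + x := by
  nlinarith [Real.sq_sqrt hx, Real.sqrt_nonneg x]

private lemma sqrt_add_le' (x y : ℝ) (hx : 0 ≤ x) (hy : 0 ≤ y) :
    Real.sqrt (x + y) ≤ Real.sqrt x + Real.sqrt y := by
  have h1 := Real.sq_sqrt hx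
  have h2 := Real.sq_sqrt hy
  have h3 := Real.sqrt_nonneg x
  have h4 := Real.sqrt_nonneg y
  have : Real.sqrt (x + y) ≤ Real.sqrt ((Real.sqrt x + Real.sqrt y) ^ 2) := by
    apply Real.sqrt_le_sqrt; nlinarith [mul_nonneg h3 h4]
  rwa [Real.sqrt_sq (by positivity)] at this

private lemma quad_root_bound' {c A B x : ℝ} (hc : 0 < c) (hA : 0 ≤ A) (hB : 0 ≤ B)
    (hx : 0 ≤ x) (h : c * x ^ 2 ≤ A + B * x) : x ≤ B / c + Real.sqrt (A / c) := by
  by_contra hlt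
  push_neg at hlt
  have hs := Real.sq_sqrt (div_nonneg hA hc.le)
  have hs0 := Real.sqrt_nonneg (A / c)
  have hBc : 0 ≤ B / c := div_nonneg hB hc.le
  have hx0 : 0 < x := lt_of_le_of_lt (by linarith) hlt
  have h1 : B + c * Real.sqrt (A / c) < c * x := by
    have h2 := mul_lt_mul_of_pos_left hlt hc
    rw [mul_add, mul_div_cancel₀ _ hc.ne'] at h2
    linarith
  have hxs : Real.sqrt (A / c) ≤ x := by linarith
  have hcs : c * (A / c) = A := mul_div_cancel₀ A hc.ne'
  nlinarith [mul_lt_mul_of_pos_right h1 hx0,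
    mul_nonneg (mul_nonneg hc.le hs0) (sub_nonneg.mpr hxs), hs, hcs]

open Nat in
private lemma gronwall_aux' {T α β : ℝ} (hT : 0 ≤ T) (hα : 0 ≤ α) (hβ : 0 < β)
    (g : ℝ → ℝ) (hg0 : ∀ t, 0 ≤ g t)
    (hint : IntegrableOn g (Icc 0 T))
    (hbound : ∀ᵐ t ∂(volume.restrict (Icc (0:ℝ) T)),
      t ∈ Icc (0:ℝ) T → g t ≤ α + β * ∫ τ in (0:ℝ)..t, g τ) :
    ∀ t ∈ Icc (0:ℝ) T, (∫ τ in (0:ℝ)..t, g τ) ≤ α / β * (Real.exp (β * t) - 1) := by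
  set Φ : ℝ := ∫ τ in Icc (0:ℝ) T, g τ with hΦdef
  have hΦ0 : 0 ≤ Φ := setIntegral_nonneg measurableSet_Icc fun x _ => hg0 x
  have hii : ∀ t ∈ Icc (0:ℝ) T, IntervalIntegrable g volume 0 t := by
    intro t ht
    refine (hint.mono_set ?_).intervalIntegrable
    rw [uIcc_of_le ht.1]
    exact Icc_subset_Icc_right ht.2
  have hφle : ∀ t ∈ Icc (0:ℝ) T, (∫ τ in (0:ℝ)..t, g τ) ≤ Φ := by
    intro t ht
    rw [intervalIntegral.integral_of_le ht.1]
    refine setIntegral_mono_set hint (Filter.Eventually.of_forall fun x => hg0 x) ?_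
    exact HasSubset.Subset.eventuallyLE (Ioc_subset_Icc_self.trans (Icc_subset_Icc_right ht.2))
  have key : ∀ n : ℕ, ∀ t ∈ Icc (0:ℝ) T,
      (∫ τ in (0:ℝ)..t, g τ) ≤ α / β * (Real.exp (β * t) - 1) + Φ * (β * t) ^ n / n ! := by
    intro n
    induction n with
    | zero =>
      intro t ht
      have h1 : (1:ℝ) ≤ Real.exp (β * t) := Real.one_le_exp (mul_nonneg hβ.le ht.1)
      have h2 : 0 ≤ α / β := div_nonneg hα hβ.le
      simp only [pow_zero, Nat.factorial_zero, Nat.cast_one]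
      have := hφle t ht
      nlinarith
    | succ n ih =>
      intro t ht
      set b : ℝ → ℝ := fun τ => α * Real.exp (β * τ) + Φ * β ^ (n + 1) * τ ^ n / n ! with hbdef
      have hb_cont : Continuous b := by
        apply Continuous.add
        · exact continuous_const.mul ((continuous_const.mul continuous_id).rexp)
        · exact ((continuous_const.mul (continuous_pow n)).div_const _)
      have step1 : (∫ τ in (0:ℝ)..t, g τ) ≤ ∫ τ in (0:ℝ)..t, b τ := by
        refine intervalIntegral.integral_mono_ae_restrict ht.1 (hii t ht)
          (hb_cont.intervalIntegrable 0 t) ?_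
        have hsub : Icc (0:ℝ) t ⊆ Icc (0:ℝ) T := Icc_subset_Icc_right ht.2
        have hb' := hbound.filter_mono (ae_mono (Measure.restrict_mono hsub le_rfl))
        filter_upwards [hb', ae_restrict_mem measurableSet_Icc] with τ hτ hτmem
        have hτT : τ ∈ Icc (0:ℝ) T := hsub hτmem
        have h1 := hτ hτT
        have h2 := ih τ hτT
        have h3 : g τ ≤ α + β * (α / β * (Real.exp (β * τ) - 1) + Φ * (β * τ) ^ n / n !) := by
          refine h1.trans ?_
          have : (0:ℝ) < β := hβ
          nlinarith [h2]
        refine h3.trans (le_of_eq ?_)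
        have hβne : β ≠ 0 := hβ.ne'
        simp only [hbdef, mul_pow]
        field_simp
        ring
      have step2 : (∫ τ in (0:ℝ)..t, b τ)
          = α / β * (Real.exp (β * t) - 1) + Φ * (β * t) ^ (n + 1) / (n + 1)! := by
        set F : ℝ → ℝ := fun τ =>
          α / β * Real.exp (β * τ) + Φ * β ^ (n + 1) * τ ^ (n + 1) / ((n + 1) * n !) with hFdef
        have hF : ∀ τ ∈ uIcc (0:ℝ) t, HasDerivAt F (b τ) τ := by
          intro τ _
          have h1 : HasDerivAt (fun x : ℝ => β * x) (β * 1) τ := (hasDerivAt_id τ).const_mul β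
          have h2 : HasDerivAt (fun x : ℝ => Real.exp (β * x))
              (Real.exp (β * τ) * (β * 1)) τ := h1.exp
          have h3 : HasDerivAt (fun x : ℝ => x ^ (n + 1))
              (((n:ℝ) + 1) * τ ^ n) τ := by
            simpa using hasDerivAt_pow (n + 1) τ
          have h4 := ((h2.const_mul (α / β)).add
            (((h3.const_mul (Φ * β ^ (n + 1))).div_const (((n:ℝ) + 1) * n !))))
          refine h4.congr_deriv ?_
          have hβne : β ≠ 0 := hβ.ne'
          have hn : ((n:ℝ) + 1) ≠ 0 := by positivity
          have hfac : ((n !:ℝ)) ≠ 0 := by positivity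
          simp only [hbdef]
          field_simp
        rw [intervalIntegral.integral_eq_sub_of_hasDerivAt hF
          (hb_cont.intervalIntegrable 0 t)]
        simp only [hFdef]
        have hfs : ((n + 1)! : ℝ) = ((n:ℝ) + 1) * n ! := by
          rw [Nat.factorial_succ]; push_cast; ring
        rw [hfs]
        simp [mul_pow, mul_comm]
        ring
      calc (∫ τ in (0:ℝ)..t, g τ) ≤ ∫ τ in (0:ℝ)..t, b τ := step1
        _ = _ := step2
  intro t ht
  have htd := FloorSemiring.tendsto_pow_div_factorial_atTop (β * t)
  have htd2 : Filter.Tendsto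
      (fun n : ℕ => α / β * (Real.exp (β * t) - 1) + Φ * (β * t) ^ n / n !)
      Filter.atTop (nhds (α / β * (Real.exp (β * t) - 1) + Φ * 0)) := by
    refine Filter.Tendsto.add tendsto_const_nhds ?_
    have := htd.const_mul Φ
    simpa [mul_div_assoc] using this
  rw [mul_zero, add_zero] at htd2
  exact ge_of_tendsto htd2 (Filter.Eventually.of_forall fun n => key n t ht)

private lemma bounded_selection' {H : Type*} [NormedAddCommGroup H]
    {T : ℝ} (hT : 0 < T) {C : ℝ → Set H}
    (hC : ∀ t ∈ Icc (0:ℝ) T, (C t).Nonempty)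
    (hLL : ∀ tb ∈ Icc (0:ℝ) T, ∀ xb ∈ C tb,
      ∃ V ∈ nhdsWithin tb (Icc (0:ℝ) T), ∃ W ∈ nhds xb, ∃ κ > (0:ℝ),
        ∀ t' ∈ V ∩ Icc (0:ℝ) T, ∀ t'' ∈ V ∩ Icc (0:ℝ) T,
          ∀ x ∈ C t' ∩ W, ∃ z ∈ C t'', ‖x - z‖ ≤ κ * |t' - t''|) :
    ∃ R : ℝ, 0 ≤ R ∧ ∀ t ∈ Icc (0:ℝ) T, ∃ z ∈ C t, ‖z‖ ≤ R := by
  have main : ∃ R : ℝ, ∀ t ∈ Icc (0:ℝ) T, ∃ z ∈ C t, ‖z‖ ≤ R := by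
    refine IsCompact.induction_on (isCompact_Icc)
      ⟨0, by simp⟩ ?_ ?_ ?_
    · rintro s t hst ⟨R, hR⟩
      exact ⟨R, fun x hx => hR x (hst hx)⟩
    · rintro s t ⟨R₁, h₁⟩ ⟨R₂, h₂⟩
      refine ⟨max R₁ R₂, ?_⟩
      rintro x (hx | hx)
      · obtain ⟨z, hz, hzn⟩ := h₁ x hx
        exact ⟨z, hz, hzn.trans (le_max_left _ _)⟩
      · obtain ⟨z, hz, hzn⟩ := h₂ x hx
        exact ⟨z, hz, hzn.trans (le_max_right _ _)⟩
    · intro x hx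
      obtain ⟨xb, hxb⟩ := hC x hx
      obtain ⟨V, hV, W, hW, κ, hκ, hprop⟩ := hLL x hx xb hxb
      refine ⟨V ∩ Icc 0 T, Filter.inter_mem hV self_mem_nhdsWithin, ‖xb‖ + κ * T, ?_⟩
      intro t ht
      have hxV : x ∈ V := mem_of_mem_nhdsWithin hx hV
      obtain ⟨z, hz, hzn⟩ := hprop x ⟨hxV, hx⟩ t ht xb ⟨hxb, mem_of_mem_nhds hW⟩
      refine ⟨z, hz, ?_⟩
      have habs : |x - t| ≤ T := by
        rw [abs_sub_le_iff]
        constructor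
        · linarith [hx.1, hx.2, ht.2.1, ht.2.2]
        · linarith [hx.1, hx.2, ht.2.1, ht.2.2]
      calc ‖z‖ = ‖xb - (xb - z)‖ := by rw [sub_sub_cancel]
        _ ≤ ‖xb‖ + ‖xb - z‖ := norm_sub_le _ _
        _ ≤ ‖xb‖ + κ * T := by
            have := hzn.trans (mul_le_mul_of_nonneg_left habs hκ.le)
            linarith
  obtain ⟨R, hR⟩ := main
  refine ⟨max R 0, le_max_right _ _, fun t ht => ?_⟩
  obtain ⟨z, hz, hzn⟩ := hR t ht
  exact ⟨z, hz, hzn.trans (le_max_left _ _)⟩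

theorem boundedness_sol_Lipschitz_like
    {H : Type*} [NormedAddCommGroup H] [InnerProductSpace ℝ H] [CompleteSpace H]
    (T : ℝ) (hT : 0 < T) (A₀ A₁ : H →L[ℝ] H)
    (hA₀sym : ∀ x y : H, ⟪A₀ x, y⟫ = ⟪x, A₀ y⟫)
    (hA₁sym : ∀ x y : H, ⟪A₁ x, y⟫ = ⟪x, A₁ y⟫)
    (hA₀pos : ∀ x : H, 0 ≤ ⟪A₀ x, x⟫)
    (hA₁pos : ∀ x : H, 0 ≤ ⟪A₁ x, x⟫)
    (f : ℝ → H) (hf : ContinuousOn f (Icc 0 T))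
    (C : ℝ → Set H)
    (hC : ∀ t ∈ Icc (0:ℝ) T, (C t).Nonempty ∧ Convex ℝ (C t))
    (hLL : ∀ tb ∈ Icc (0:ℝ) T, ∀ xb ∈ C tb,
      ∃ V ∈ nhdsWithin tb (Icc (0:ℝ) T), ∃ W ∈ nhds xb, ∃ κ > (0:ℝ),
        ∀ t' ∈ V ∩ Icc (0:ℝ) T, ∀ t'' ∈ V ∩ Icc (0:ℝ) T,
          ∀ x ∈ C t' ∩ W, ∃ z ∈ C t'', ‖x - z‖ ≤ κ * |t' - t''|)
    (c₁ c₂ : ℝ) (hc₁ : 0 < c₁) (hc₂ : 0 < c₂)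
    (hcoer : ∀ t ∈ Icc (0:ℝ) T, ∀ x ∈ C t, c₁ * ‖x‖ ^ 2 - c₂ ≤ ⟪A₁ x, x⟫) :
    ∀ u₀ ∈ C 0, ∃ M > (0:ℝ), ∀ u v : ℝ → H, SweepSol T A₀ A₁ f C u₀ u v →
      (∀ t ∈ Icc (0:ℝ) T, ‖u t‖ ≤ M) ∧ (∫ τ in Icc (0:ℝ) T, ‖v τ‖) ≤ M := by
  intro u₀ hu₀
  obtain ⟨R, hR0, hsel⟩ := bounded_selection' hT (fun t ht => (hC t ht).1) hLL
  obtain ⟨F, hFb⟩ := isCompact_Icc.exists_bound_of_continuousOn hf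
  have hF0 : 0 ≤ F := le_trans (norm_nonneg _) (hFb 0 ⟨le_rfl, hT.le⟩)
  have hN₀ : (0:ℝ) ≤ ‖A₀‖ := norm_nonneg _
  have hN₁ : (0:ℝ) ≤ ‖A₁‖ := norm_nonneg _
  have hU₀ : (0:ℝ) ≤ ‖u₀‖ := norm_nonneg _
  set N₀ : ℝ := ‖A₀‖
  set N₁ : ℝ := ‖A₁‖
  set U₀ : ℝ := ‖u₀‖
  set a₀ : ℝ := c₂ + (N₀ * U₀ + F) * R with ha₀def
  set a₁ : ℝ := N₀ * R with ha₁def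
  set b₀ : ℝ := N₁ * R + N₀ * U₀ + F with hb₀def
  set b₁ : ℝ := N₀ with hb₁def
  have ha₀ : 0 ≤ a₀ := by
    have : 0 ≤ (N₀ * U₀ + F) * R :=
      mul_nonneg (add_nonneg (mul_nonneg hN₀ hU₀) hF0) hR0
    linarith
  have ha₁ : 0 ≤ a₁ := mul_nonneg hN₀ hR0
  have hb₀ : 0 ≤ b₀ :=
    add_nonneg (add_nonneg (mul_nonneg hN₁ hR0) (mul_nonneg hN₀ hU₀)) hF0
  have hb₁ : 0 ≤ b₁ := hN₀
  set α : ℝ := b₀ / c₁ + Real.sqrt (a₀ / c₁) + Real.sqrt (a₁ / c₁) + 1 with hαdef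
  set β : ℝ := b₁ / c₁ + Real.sqrt (a₁ / c₁) + 1 with hβdef
  have hα : 0 < α := by
    have := Real.sqrt_nonneg (a₀ / c₁)
    have := Real.sqrt_nonneg (a₁ / c₁)
    have : 0 ≤ b₀ / c₁ := div_nonneg hb₀ hc₁.le
    simp only [hαdef]
    positivity
  have hβ : 0 < β := by
    have : 0 ≤ b₁ / c₁ := div_nonneg hb₁ hc₁.le
    have := Real.sqrt_nonneg (a₁ / c₁)
    simp only [hβdef]
    positivity
  set L : ℝ := α / β * (Real.exp (β * T) - 1) with hLdef
  have hL0 : 0 ≤ L := by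
    refine mul_nonneg (div_nonneg hα.le hβ.le) (sub_nonneg.mpr ?_)
    exact Real.one_le_exp (mul_nonneg hβ.le hT.le)
  refine ⟨U₀ + L + 1, by linarith, ?_⟩
  rintro u v ⟨hvint, hu, hae⟩
  have hnormint : IntegrableOn (fun τ => ‖v τ‖) (Icc 0 T) := hvint.norm
  have huφ : ∀ t ∈ Icc (0:ℝ) T, ‖u t‖ ≤ U₀ + ∫ τ in (0:ℝ)..t, ‖v τ‖ := by
    intro t ht
    rw [hu t ht]
    refine (norm_add_le _ _).trans (add_le_add (le_refl _) ?_)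
    exact intervalIntegral.norm_integral_le_integral_norm ht.1
  have hφnn : ∀ t ∈ Icc (0:ℝ) T, (0:ℝ) ≤ ∫ τ in (0:ℝ)..t, ‖v τ‖ :=
    fun t ht => intervalIntegral.integral_nonneg ht.1 fun _ _ => norm_nonneg _
  have hbd : ∀ᵐ t ∂(volume.restrict (Icc (0:ℝ) T)),
      t ∈ Icc (0:ℝ) T → ‖v t‖ ≤ α + β * ∫ τ in (0:ℝ)..t, ‖v τ‖ := by
    filter_upwards [hae, ae_restrict_mem measurableSet_Icc] with t hVI ht _
    obtain ⟨hvC, hineq⟩ := hVI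
    obtain ⟨z, hzC, hzR⟩ := hsel t ht
    set φ : ℝ := ∫ τ in (0:ℝ)..t, ‖v τ‖ with hφdef
    have hφ0 : 0 ≤ φ := hφnn t ht
    have hq : ‖u t‖ ≤ U₀ + φ := huφ t ht
    have h1 := hineq z hzC
    have hexp : ⟪A₁ (v t) + A₀ (u t) - f t, z - v t⟫
        = ⟪A₁ (v t), z⟫ - ⟪A₁ (v t), v t⟫ + ⟪A₀ (u t), z⟫ - ⟪A₀ (u t), v t⟫
          - ⟪f t, z⟫ + ⟪f t, v t⟫ := by
      simp only [inner_add_left, inner_sub_left, inner_sub_right]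
      ring
    rw [hexp] at h1
    have hcoe := hcoer t ht (v t) hvC
    have hb1 : ⟪A₁ (v t), z⟫ ≤ N₁ * ‖v t‖ * R := by
      calc ⟪A₁ (v t), z⟫ ≤ ‖A₁ (v t)‖ * ‖z‖ := real_inner_le_norm _ _
        _ ≤ N₁ * ‖v t‖ * R :=
          mul_le_mul (A₁.le_opNorm (v t)) hzR (norm_nonneg z)
            (mul_nonneg hN₁ (norm_nonneg _))
    have hb2 : ⟪A₀ (u t), z⟫ ≤ N₀ * ‖u t‖ * R := by
      calc ⟪A₀ (u t), z⟫ ≤ ‖A₀ (u t)‖ * ‖z‖ := real_inner_le_norm _ _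
        _ ≤ N₀ * ‖u t‖ * R :=
          mul_le_mul (A₀.le_opNorm (u t)) hzR (norm_nonneg z)
            (mul_nonneg hN₀ (norm_nonneg _))
    have hb3 : -⟪A₀ (u t), v t⟫ ≤ N₀ * ‖u t‖ * ‖v t‖ := by
      have h := abs_real_inner_le_norm (A₀ (u t)) (v t)
      have h' : ‖A₀ (u t)‖ * ‖v t‖ ≤ N₀ * ‖u t‖ * ‖v t‖ :=
        mul_le_mul_of_nonneg_right (A₀.le_opNorm (u t)) (norm_nonneg _)
      have := (abs_le.mp h).1
      linarith
    have hfF : ‖f t‖ ≤ F := hFb t ht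
    have hb4 : -⟪f t, z⟫ ≤ F * R := by
      have h := abs_real_inner_le_norm (f t) z
      have h2 := (abs_le.mp h).1
      have h3 : ‖f t‖ * ‖z‖ ≤ F * R := mul_le_mul hfF hzR (norm_nonneg z) hF0
      linarith
    have hb5 : ⟪f t, v t⟫ ≤ F * ‖v t‖ := by
      have h := real_inner_le_norm (f t) (v t)
      have h2 : ‖f t‖ * ‖v t‖ ≤ F * ‖v t‖ :=
        mul_le_mul_of_nonneg_right hfF (norm_nonneg _)
      linarith
    have huq1 : N₀ * ‖u t‖ * R ≤ N₀ * (U₀ + φ) * R :=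
      mul_le_mul_of_nonneg_right (mul_le_mul_of_nonneg_left hq hN₀) hR0
    have huq2 : N₀ * ‖u t‖ * ‖v t‖ ≤ N₀ * (U₀ + φ) * ‖v t‖ :=
      mul_le_mul_of_nonneg_right (mul_le_mul_of_nonneg_left hq hN₀) (norm_nonneg (v t))
    have hkey : c₁ * ‖v t‖ ^ 2 ≤ (a₀ + a₁ * φ) + (b₀ + b₁ * φ) * ‖v t‖ := by
      calc c₁ * ‖v t‖ ^ 2
          ≤ c₂ + N₁ * ‖v t‖ * R + N₀ * (U₀ + φ) * R + N₀ * (U₀ + φ) * ‖v t‖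
            + F * R + F * ‖v t‖ := by linarith
        _ = (a₀ + a₁ * φ) + (b₀ + b₁ * φ) * ‖v t‖ := by
            simp only [ha₀def, ha₁def, hb₀def, hb₁def]; ring
    have hvb := quad_root_bound' hc₁ (add_nonneg ha₀ (mul_nonneg ha₁ hφ0))
      (add_nonneg hb₀ (mul_nonneg hb₁ hφ0)) (norm_nonneg (v t)) hkey
    have hsq : Real.sqrt ((a₀ + a₁ * φ) / c₁)
        ≤ Real.sqrt (a₀ / c₁) + Real.sqrt (a₁ / c₁) * (1 + φ) := by
      have he : (a₀ + a₁ * φ) / c₁ = a₀ / c₁ + (a₁ / c₁) * φ := by ring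
      rw [he]
      refine (sqrt_add_le' _ _ (div_nonneg ha₀ hc₁.le)
        (mul_nonneg (div_nonneg ha₁ hc₁.le) hφ0)).trans ?_
      refine add_le_add (le_refl _) ?_
      rw [Real.sqrt_mul (div_nonneg ha₁ hc₁.le)]
      exact mul_le_mul_of_nonneg_left (sqrt_le_one_add' φ hφ0)
        (Real.sqrt_nonneg _)
    have hdiv : (b₀ + b₁ * φ) / c₁ = b₀ / c₁ + (b₁ / c₁) * φ := by ring
    rw [hdiv] at hvb
    have hfinal : ‖v t‖ ≤ b₀ / c₁ + b₁ / c₁ * φ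
        + (Real.sqrt (a₀ / c₁) + Real.sqrt (a₁ / c₁) * (1 + φ)) := by linarith
    calc ‖v t‖ ≤ b₀ / c₁ + b₁ / c₁ * φ
          + (Real.sqrt (a₀ / c₁) + Real.sqrt (a₁ / c₁) * (1 + φ)) := hfinal
      _ ≤ α + β * φ := by
          simp only [hαdef, hβdef]
          have h1 : Real.sqrt (a₁ / c₁) * (1 + φ)
              = Real.sqrt (a₁ / c₁) + Real.sqrt (a₁ / c₁) * φ := by ring
          have h2 : (b₁ / c₁ + Real.sqrt (a₁ / c₁) + 1) * φ
              = b₁ / c₁ * φ + Real.sqrt (a₁ / c₁) * φ + φ := by ring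
          linarith
  have hgr := gronwall_aux' hT.le hα.le hβ (fun τ => ‖v τ‖)
    (fun τ => norm_nonneg (v τ)) hnormint hbd
  constructor
  · intro t ht
    have h1 := huφ t ht
    have h2 := hgr t ht
    have h3 : Real.exp (β * t) ≤ Real.exp (β * T) :=
      Real.exp_le_exp.mpr (mul_le_mul_of_nonneg_left ht.2 hβ.le)
    have h4 : α / β * (Real.exp (β * t) - 1) ≤ L := by
      refine mul_le_mul_of_nonneg_left ?_ (div_nonneg hα.le hβ.le)
      linarith
    linarith
  · have he : (∫ τ in Icc (0:ℝ) T, ‖v τ‖) = ∫ τ in (0:ℝ)..T, ‖v τ‖ := by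
      rw [intervalIntegral.integral_of_le hT.le, integral_Icc_eq_integral_Ioc]
    rw [he]
    have := hgr T ⟨hT.le, le_rfl⟩
    linarith
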